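/- Let E be a real Hilbert space, (S(t))_{t≥0} a C₀-semigroup on E, T > 0, and C ⊆ E a nonempty closed convex bounded set. Let x₀ ∈ E and let w : [0,T] → E be Bochner integrable with w(s) ∈ C for a.e. s ∈ [0,T], and suppose x₀ = S(t)x₀ + ∫₀ᵗ S(t−s) w(s) ds for every t ∈ [0,T]. Then there exists y ∈ C such that (S(t)x₀ − x₀)/t → −y as t → 0⁺; i.e., x₀ belongs to the domain of the generator A of the semigroup and Ax₀ = −y ∈ −C. -/

import Mathlib

open MeasureTheory Filter Set

/-- Let `(S(t))` be a `C₀`-semigroup on a real Hilbert space, `C` a nonempty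
closed convex bounded set, and `w : [0,T] → E` Bochner integrable with `w(s) ∈ C` a.e.  If
`x₀ = S(t)x₀ + ∫₀ᵗ S(t-s) w(s) ds` for every `t ∈ [0,T]`, then there is `y ∈ C` with
`(S(t)x₀ - x₀)/t → -y` as `t → 0⁺`; i.e. `x₀ ∈ D(A)` and `Ax₀ = -y ∈ -C`. -/
theorem stationary_point_in_generator_domain
    {E : Type*} [NormedAddCommGroup E] [InnerProductSpace ℝ E] [CompleteSpace E]
    (S : ℝ → E →L[ℝ] E)
    (hS0 : S 0 = ContinuousLinearMap.id ℝ E)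
    (hSadd : ∀ s t : ℝ, 0 ≤ s → 0 ≤ t → S (t + s) = (S t).comp (S s))
    (hScont : ∀ x : E, ContinuousOn (fun t => S t x) (Set.Ici (0:ℝ)))
    (T : ℝ) (hT : 0 < T)
    (C : Set E) (hCne : C.Nonempty) (hCcl : IsClosed C) (hCconv : Convex ℝ C)
    (hCbdd : Bornology.IsBounded C)
    (x₀ : E) (w : ℝ → E) (hw : IntegrableOn w (Set.Icc 0 T))
    (hwC : ∀ᵐ s ∂(volume.restrict (Set.Icc (0:ℝ) T)), w s ∈ C)
    (hstat : ∀ t ∈ Set.Icc (0:ℝ) T,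
      x₀ = S t x₀ + ∫ s in (0:ℝ)..t, S (t - s) (w s)) :
    ∃ y ∈ C, Tendsto (fun t : ℝ => t⁻¹ • (S t x₀ - x₀))
      (nhdsWithin 0 (Set.Ioi 0)) (nhds (-y)) := by
  -- uniform bounds on compact time intervals
  have hM : ∀ b : ℝ, 0 ≤ b → ∃ M : ℝ, 1 ≤ M ∧ ∀ τ ∈ Icc (0:ℝ) b, ‖S τ‖ ≤ M := by
    intro b hb
    have hpt : ∀ x : E, ∃ cx : ℝ, ∀ i : Icc (0:ℝ) b, ‖S i x‖ ≤ cx := by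
      intro x
      obtain ⟨cx, hcx⟩ := isCompact_Icc.exists_bound_of_continuousOn
        ((hScont x).mono (Icc_subset_Ici_self))
      exact ⟨cx, fun i => hcx i i.2⟩
    obtain ⟨M0, hM0⟩ := banach_steinhaus hpt
    exact ⟨max M0 1, le_max_right _ _,
      fun τ hτ => le_trans (hM0 ⟨τ, hτ⟩) (le_max_left _ _)⟩
  -- joint continuity of the (extended) semigroup action
  have hGcont : Continuous (fun p : ℝ × E => S (max p.1 0) p.2) := by
    rw [continuous_iff_continuousAt]
    rintro ⟨τ₀, z⟩
    obtain ⟨M, hM1, hMb⟩ := hM (max τ₀ 0 + 1) (by positivity)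
    have h2 : Continuous fun τ : ℝ => S (max τ 0) z :=
      (hScont z).comp_continuous (continuous_id.max continuous_const)
        (fun τ => mem_Ici.2 (le_max_right _ _))
    have h1 : Tendsto (fun p : ℝ × E => S (max p.1 0) (p.2 - z)) (nhds (τ₀, z)) (nhds 0) := by
      have hev : ∀ᶠ p : ℝ × E in nhds (τ₀, z), p.1 < τ₀ + 1 :=
        Filter.Tendsto.eventually_lt_const (show τ₀ < τ₀ + 1 by linarith)
          (continuous_fst.tendsto (τ₀, z))
      have hb : ∀ᶠ p : ℝ × E in nhds (τ₀, z), ‖S (max p.1 0) (p.2 - z)‖ ≤ M * ‖p.2 - z‖ := by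
        filter_upwards [hev] with p hp
        refine le_trans ((S (max p.1 0)).le_opNorm _) ?_
        refine mul_le_mul_of_nonneg_right (hMb _ ⟨le_max_right _ _, ?_⟩) (norm_nonneg _)
        have h1' : p.1 ≤ max τ₀ 0 + 1 := le_trans hp.le (by linarith [le_max_left τ₀ 0])
        exact max_le h1' (by positivity)
      refine squeeze_zero_norm' hb ?_
      have : Tendsto (fun p : ℝ × E => M * ‖p.2 - z‖) (nhds (τ₀, z))
          (nhds (M * ‖z - z‖)) :=
        tendsto_const_nhds.mul (((continuous_snd.sub continuous_const).norm).tendsto _)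
      simpa using this
    have := h1.add ((h2.tendsto τ₀).comp (continuous_fst.tendsto (τ₀, z)))
    simp only [zero_add] at this
    refine this.congr (fun p => ?_)
    simp [map_sub]
  -- integrability of the integrand
  have hwm : AEStronglyMeasurable w (volume.restrict (Icc (0:ℝ) T)) := hw.aestronglyMeasurable
  obtain ⟨M, hM1, hMb⟩ := hM T hT.le
  have hMpos : (0:ℝ) < M := lt_of_lt_of_le one_pos hM1
  have key_int : ∀ c ∈ Icc (0:ℝ) T, IntegrableOn (fun s => S (c - s) (w s)) (Icc 0 c) volume := by
    intro c hc
    have hsub : Icc (0:ℝ) c ⊆ Icc 0 T := Icc_subset_Icc le_rfl hc.2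
    have hwm' : AEStronglyMeasurable w (volume.restrict (Icc (0:ℝ) c)) :=
      hwm.mono_measure (Measure.restrict_mono hsub le_rfl)
    have hmeas : AEStronglyMeasurable (fun s => S (max (c - s) 0) (w s))
        (volume.restrict (Icc (0:ℝ) c)) :=
      hGcont.comp_aestronglyMeasurable
        (((continuous_const.sub continuous_id).aestronglyMeasurable).prodMk hwm')
    have heq : ∀ᵐ s ∂(volume.restrict (Icc (0:ℝ) c)),
        S (max (c - s) 0) (w s) = S (c - s) (w s) := by
      filter_upwards [ae_restrict_mem measurableSet_Icc] with s hs
      rw [max_eq_left (by linarith [hs.2])]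
    refine Integrable.mono' ((hw.mono_set hsub).norm.const_mul M) (hmeas.congr heq) ?_
    filter_upwards [ae_restrict_mem measurableSet_Icc] with s hs
    refine le_trans ((S (c - s)).le_opNorm _) ?_
    exact mul_le_mul_of_nonneg_right
      (hMb _ ⟨by linarith [hs.2], by linarith [hs.1, hc.2]⟩) (norm_nonneg _)
  have key_ii : ∀ c ∈ Icc (0:ℝ) T, ∀ a b : ℝ, 0 ≤ a → a ≤ b → b ≤ c →
      IntervalIntegrable (fun s => S (c - s) (w s)) volume a b := by
    intro c hc a b ha hab hbc
    rw [intervalIntegrable_iff_integrableOn_Icc_of_le hab]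
    exact (key_int c hc).mono_set (Icc_subset_Icc ha hbc)
  -- the key identity
  have key : ∀ t h : ℝ, 0 ≤ t → 0 < h → t + h ≤ T →
      x₀ - S h x₀ = ∫ s in t..(t + h), S (t + h - s) (w s) := by
    intro t h ht hh hth
    have hu : t + h ∈ Icc (0:ℝ) T := ⟨by linarith, hth⟩
    have ht' : t ∈ Icc (0:ℝ) T := ⟨ht, by linarith⟩
    have e1 := hstat (t + h) hu
    have e2 := hstat t ht'
    have hii1 : IntervalIntegrable (fun s => S (t + h - s) (w s)) volume 0 t :=
      key_ii (t + h) hu 0 t le_rfl ht (by linarith)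
    have hii2 : IntervalIntegrable (fun s => S (t + h - s) (w s)) volume t (t + h) :=
      key_ii (t + h) hu t (t + h) ht (by linarith) le_rfl
    have hii2' : IntervalIntegrable (fun s => S (t - s) (w s)) volume 0 t :=
      key_ii t ht' 0 t le_rfl ht le_rfl
    have e3 : S h x₀ = S (t + h) x₀ + ∫ s in (0:ℝ)..t, S (t + h - s) (w s) := by
      have e2' := congrArg (fun v => S h v) e2
      simp only [map_add] at e2'
      rw [← (S h).intervalIntegral_comp_comm hii2'] at e2'
      rw [e2']
      congr 1
      · rw [show t + h = h + t from add_comm t h, hSadd t h ht hh.le]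
        rfl
      · apply intervalIntegral.integral_congr
        intro s hs
        rw [uIcc_of_le ht] at hs
        show (S h) ((S (t - s)) (w s)) = (S (t + h - s)) (w s)
        have heq : S (t + h - s) = (S h).comp (S (t - s)) := by
          rw [show t + h - s = h + (t - s) by ring]
          exact hSadd (t - s) h (by linarith [hs.2]) hh.le
        rw [heq]; rfl
    have hsplit : (∫ s in (0:ℝ)..t, S (t + h - s) (w s))
          + (∫ s in t..(t + h), S (t + h - s) (w s))
        = ∫ s in (0:ℝ)..(t + h), S (t + h - s) (w s) :=
      intervalIntegral.integral_add_adjacent_intervals hii1 hii2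
    have : x₀ - S h x₀ = (∫ s in (0:ℝ)..(t + h), S (t + h - s) (w s))
        - ∫ s in (0:ℝ)..t, S (t + h - s) (w s) := by
      rw [e3]
      nth_rewrite 1 [e1]
      abel
    rw [this, ← hsplit]
    abel
  -- Lebesgue point selection
  set w' : ℝ → E := (Icc (0:ℝ) T).indicator w with hw'def
  have hw'int : Integrable w' := (integrable_indicator_iff measurableSet_Icc).2 hw
  have hloc : LocallyIntegrable w' volume := hw'int.locallyIntegrable
  have hleb := (IsUnifLocDoublingMeasure.vitaliFamily (volume : Measure ℝ)
    1).ae_tendsto_average_norm_sub hloc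
  have hIoo : volume (Ioo (0:ℝ) T) ≠ 0 := by
    simp only [Real.volume_Ioo, ne_eq, ENNReal.ofReal_eq_zero, not_le, sub_zero]
    exact hT
  have hae : ∀ᵐ s ∂(volume.restrict (Ioo (0:ℝ) T)),
      (Tendsto (fun a => ⨍ y in a, ‖w' y - w' s‖)
        ((IsUnifLocDoublingMeasure.vitaliFamily (volume : Measure ℝ) 1).filterAt s)
        (nhds 0)) ∧ w s ∈ C := by
    exact (ae_restrict_of_ae hleb).and
      (ae_restrict_of_ae_restrict_of_subset Ioo_subset_Icc_self hwC)
  obtain ⟨t₀, ht₀mem, ht₀leb, ht₀C⟩ := Measure.exists_mem_of_measure_ne_zero_of_ae hIoo hae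
  have ht₀Icc : t₀ ∈ Icc (0:ℝ) T := Ioo_subset_Icc_self ht₀mem
  refine ⟨w t₀, ht₀C, ?_⟩
  -- the one-sided averages converge
  have hA : Tendsto (fun h : ℝ => ⨍ s in Icc t₀ (t₀ + h), ‖w' s - w' t₀‖)
      (nhdsWithin 0 (Ioi 0)) (nhds 0) := by
    have hmap : Tendsto (fun h : ℝ => t₀ + h) (nhdsWithin 0 (Ioi 0))
        (nhdsWithin t₀ (Ioi t₀)) := by
      refine tendsto_nhdsWithin_of_tendsto_nhds_of_eventually_within _ ?_ ?_
      · have h0 : Tendsto (fun h : ℝ => t₀ + h) (nhds 0) (nhds (t₀ + 0)) :=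
          (continuous_const.add continuous_id).tendsto 0
        simpa using h0.mono_left nhdsWithin_le_nhds
      · filter_upwards [self_mem_nhdsWithin] with u hu
        have : (0:ℝ) < u := hu
        simp only [mem_Ioi]
        linarith
    exact (ht₀leb.comp (Real.tendsto_Icc_vitaliFamily_right t₀)).comp hmap
  -- pass to the main limit
  have hpos : Tendsto (fun h : ℝ => h⁻¹ • (x₀ - S h x₀)) (nhdsWithin 0 (Ioi 0))
      (nhds (w t₀)) := by
    rw [Metric.tendsto_nhds]
    intro ε hε
    -- continuity of the orbit of w t₀ at time 0
    have hc0 : Tendsto (fun τ => S τ (w t₀)) (nhdsWithin 0 (Ici 0)) (nhds (w t₀)) := by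
      have h0 := hScont (w t₀) 0 self_mem_Ici
      have : S 0 (w t₀) = w t₀ := by rw [hS0]; rfl
      rw [ContinuousWithinAt, this] at h0
      exact h0
    rw [Metric.tendsto_nhdsWithin_nhds] at hc0
    obtain ⟨δ, hδpos, hδ⟩ := hc0 (ε/2) (by positivity)
    have ev1 : ∀ᶠ h : ℝ in nhdsWithin 0 (Ioi 0),
        (⨍ s in Icc t₀ (t₀ + h), ‖w' s - w' t₀‖) < ε/(2*M) :=
      Filter.Tendsto.eventually_lt_const (by positivity) hA
    have ev2 : ∀ᶠ h : ℝ in nhdsWithin 0 (Ioi 0), h < min δ (T - t₀) := by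
      have hmin : (0:ℝ) < min δ (T - t₀) := lt_min hδpos (by linarith [ht₀mem.2])
      exact Eventually.filter_mono nhdsWithin_le_nhds (Filter.Tendsto.eventually_lt_const hmin tendsto_id)
    filter_upwards [ev1, ev2, self_mem_nhdsWithin] with h havg hlt hhpos
    have hhpos' : (0:ℝ) < h := hhpos
    have hδh : h < δ := lt_of_lt_of_le hlt (min_le_left _ _)
    have hTh : t₀ + h ≤ T := by
      have := lt_of_lt_of_le hlt (min_le_right _ _); linarith
    have ht₀0 : (0:ℝ) ≤ t₀ := ht₀mem.1.le
    have hcIcc : t₀ + h ∈ Icc (0:ℝ) T := ⟨by linarith, hTh⟩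
    have hkey := key t₀ h ht₀0 hhpos' hTh
    have hf_ii : IntervalIntegrable (fun s => S (t₀ + h - s) (w s)) volume t₀ (t₀ + h) :=
      key_ii (t₀ + h) hcIcc t₀ (t₀ + h) ht₀0 (by linarith) le_rfl
    have hw_ii : IntervalIntegrable w volume t₀ (t₀ + h) := by
      rw [intervalIntegrable_iff_integrableOn_Icc_of_le (by linarith)]
      exact hw.mono_set (Icc_subset_Icc (by linarith) (by linarith))
    have hnorm_ii : IntervalIntegrable (fun s => ‖S (t₀ + h - s) (w s) - w t₀‖)
        volume t₀ (t₀ + h) := (hf_ii.sub intervalIntegrable_const).norm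
    have hMw_ii : IntervalIntegrable (fun s => M * ‖w s - w t₀‖) volume t₀ (t₀ + h) :=
      ((hw_ii.sub intervalIntegrable_const).norm).const_mul M
    have hrhs_ii : IntervalIntegrable (fun s => M * ‖w s - w t₀‖ + ε/2) volume t₀ (t₀ + h) :=
      hMw_ii.add intervalIntegrable_const
    have hsub' : ∫ s in t₀..(t₀ + h), (S (t₀ + h - s) (w s) - w t₀)
        = (∫ s in t₀..(t₀ + h), S (t₀ + h - s) (w s)) - ∫ s in t₀..(t₀ + h), (w t₀ : E) :=
      intervalIntegral.integral_sub hf_ii intervalIntegrable_const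
    have hconst : (∫ s in t₀..(t₀ + h), (w t₀ : E)) = h • (w t₀) := by
      rw [intervalIntegral.integral_const]
      congr 1
      ring
    have havg_eq : (⨍ s in Icc t₀ (t₀ + h), ‖w' s - w' t₀‖)
        = h⁻¹ * ∫ s in t₀..(t₀ + h), ‖w s - w t₀‖ := by
      rw [setAverage_eq, Real.volume_real_Icc_of_le (by linarith)]
      rw [intervalIntegral.integral_of_le (by linarith : t₀ ≤ t₀ + h)]
      rw [← integral_Icc_eq_integral_Ioc]
      have hEq : EqOn (fun s => ‖w' s - w' t₀‖) (fun s => ‖w s - w t₀‖) (Icc t₀ (t₀ + h)) := by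
        intro s hs
        have hs' : s ∈ Icc (0:ℝ) T := ⟨by linarith [hs.1], by linarith [hs.2]⟩
        simp only [hw'def, indicator_of_mem hs' w, indicator_of_mem ht₀Icc w]
      rw [setIntegral_congr_fun measurableSet_Icc hEq]
      simp only [smul_eq_mul]
      congr 2
      ring
    have hptwise : ∀ s ∈ Icc t₀ (t₀ + h),
        ‖S (t₀ + h - s) (w s) - w t₀‖ ≤ M * ‖w s - w t₀‖ + ε/2 := by
      intro s hs
      have hτ1 : 0 ≤ t₀ + h - s := by linarith [hs.2]
      have hτ2 : t₀ + h - s ≤ h := by linarith [hs.1]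
      have tri : ‖S (t₀ + h - s) (w s) - w t₀‖
          ≤ ‖S (t₀ + h - s) (w s) - S (t₀ + h - s) (w t₀)‖ + ‖S (t₀ + h - s) (w t₀) - w t₀‖ := by
        simpa [dist_eq_norm] using
          dist_triangle (S (t₀ + h - s) (w s)) (S (t₀ + h - s) (w t₀)) (w t₀)
      refine le_trans tri (add_le_add ?_ ?_)
      · rw [← map_sub]
        refine le_trans ((S (t₀ + h - s)).le_opNorm _) ?_
        exact mul_le_mul_of_nonneg_right (hMb _ ⟨hτ1, by linarith⟩) (norm_nonneg _)
      · have := hδ hτ1 (by rw [Real.dist_eq, sub_zero, abs_of_nonneg hτ1]; linarith)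
        rw [dist_eq_norm] at this
        exact this.le
    have havg' : h⁻¹ * (∫ s in t₀..(t₀ + h), ‖w s - w t₀‖) < ε/(2*M) := by
      rw [← havg_eq]; exact havg
    calc dist (h⁻¹ • (x₀ - S h x₀)) (w t₀)
        = ‖h⁻¹ • (∫ s in t₀..(t₀ + h), S (t₀ + h - s) (w s)) - w t₀‖ := by
          rw [dist_eq_norm, hkey]
      _ = ‖h⁻¹ • ∫ s in t₀..(t₀ + h), (S (t₀ + h - s) (w s) - w t₀)‖ := by
          rw [hsub', smul_sub, hconst, smul_smul, inv_mul_cancel₀ (ne_of_gt hhpos'), one_smul]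
      _ = h⁻¹ * ‖∫ s in t₀..(t₀ + h), (S (t₀ + h - s) (w s) - w t₀)‖ := by
          rw [norm_smul, Real.norm_eq_abs, abs_of_pos (inv_pos.2 hhpos')]
      _ ≤ h⁻¹ * ∫ s in t₀..(t₀ + h), ‖S (t₀ + h - s) (w s) - w t₀‖ :=
          mul_le_mul_of_nonneg_left
            (intervalIntegral.norm_integral_le_integral_norm (by linarith)) (by positivity)
      _ ≤ h⁻¹ * ∫ s in t₀..(t₀ + h), (M * ‖w s - w t₀‖ + ε/2) := by
          refine mul_le_mul_of_nonneg_left ?_ (by positivity)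
          exact intervalIntegral.integral_mono_on (by linarith) hnorm_ii hrhs_ii hptwise
      _ = M * (h⁻¹ * ∫ s in t₀..(t₀ + h), ‖w s - w t₀‖) + ε/2 := by
          rw [intervalIntegral.integral_add hMw_ii intervalIntegrable_const,
            intervalIntegral.integral_const_mul, intervalIntegral.integral_const]
          simp only [smul_eq_mul]
          field_simp
          ring
      _ < M * (ε/(2*M)) + ε/2 := by
          exact add_lt_add_of_lt_of_le (mul_lt_mul_of_pos_left havg' hMpos) le_rfl
      _ = ε := by field_simp; ring
  have hneg := hpos.neg
  refine Tendsto.congr (fun h => ?_) hneg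
  rw [← smul_neg, neg_sub]
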